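/- For the Invincible Fighter (u = 1), let t(n,j) for 1 ≤ j ≤ n−1 denote the unique solution in t of N_n(j+1,t) = N_n(j,t), and set t(n,n) = 0 and t(n,0) = ∞. Then for every n ≥ 1 and every j = 0, …, n−1: t(n,j+1) < t(n+1,j+1) < t(n,j). In particular, K(n+1,·) changes exactly once in every interval of constancy of K(n,·). -/

import Mathlib

open Real MeasureTheory Filter Topology

/-- Auxiliary history-based recursion: `Nhist a u n m t` equals `N(m,t)` when `m ≤ n`. -/
noncomputable def Nhist (a : ℕ → ℝ) (u : ℝ) : ℕ → ℕ → ℝ → ℝ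
  | 0, _, _ => 0
  | n + 1, m, t =>
      if m ≤ n then Nhist a u n m t
      else (Finset.Icc 1 (n + 1)).sup'
          (Finset.nonempty_Icc.mpr (Nat.succ_le_succ (Nat.zero_le n)))
          (fun j => a j + (a j * (1 - u) + u) *
            (Real.exp (-t) * ∫ x in (0:ℝ)..t, Nhist a u n (n + 1 - j) x * Real.exp x))

/-- `Nval a u n t` is `N(n,t)`, the optimal expected number of enemy planes shot down,
with `N(0,t) = 0` and `N(n,t) = max_{1 ≤ j ≤ n} N_n(j,t)`. -/
noncomputable def Nval (a : ℕ → ℝ) (u : ℝ) (n : ℕ) (t : ℝ) : ℝ :=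
  Nhist a u n n t

/-- `Nstar a u r t` is `N*(r,t) = e^{-t} ∫_0^t N(r,x) e^x dx` (so `N*(0,t) = 0`). -/
noncomputable def Nstar (a : ℕ → ℝ) (u : ℝ) (r : ℕ) (t : ℝ) : ℝ :=
  Real.exp (-t) * ∫ x in (0:ℝ)..t, Nval a u r x * Real.exp x

/-- `Nalloc a u n j t` is `N_n(j,t) = a(j) + c(j)·N*(n-j,t)` where `c(j) = a(j)(1-u)+u`. -/
noncomputable def Nalloc (a : ℕ → ℝ) (u : ℝ) (n j : ℕ) (t : ℝ) : ℝ :=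
  a j + (a j * (1 - u) + u) * Nstar a u (n - j) t

section Aux

variable (a : ℕ → ℝ) (u : ℝ)

lemma Nhist_stable : ∀ n m : ℕ, m ≤ n → ∀ t : ℝ, Nhist a u n m t = Nval a u m t := by
  intro n
  induction n with
  | zero =>
      intro m hm t
      interval_cases m
      rfl
  | succ n ih =>
      intro m hm t
      rcases Nat.lt_or_ge m (n + 1) with h | h
      · have h' : m ≤ n := Nat.lt_succ_iff.mp h
        rw [Nhist, if_pos h']
        exact ih m h' t
      · have : m = n + 1 := le_antisymm hm h
        subst this
        rfl

lemma Nval_succ (n : ℕ) (t : ℝ) :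
    Nval a u (n + 1) t = (Finset.Icc 1 (n + 1)).sup'
      (Finset.nonempty_Icc.mpr (Nat.succ_le_succ (Nat.zero_le n)))
      (fun j => a j + (a j * (1 - u) + u) * Nstar a u (n + 1 - j) t) := by
  rw [Nval, Nhist, if_neg (by omega)]
  refine Finset.sup'_congr _ rfl (fun j hj => ?_)
  have hj1 : 1 ≤ j := (Finset.mem_Icc.mp hj).1
  have hx : ∀ x : ℝ, Nhist a u n (n + 1 - j) x = Nval a u (n + 1 - j) x :=
    fun x => Nhist_stable a u n (n + 1 - j) (by omega) x
  simp only [Nstar, hx]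

lemma Nval_zero_fun (t : ℝ) : Nval a u 0 t = 0 := rfl

lemma Nstar_zero_fun (t : ℝ) : Nstar a u 0 t = 0 := by
  simp [Nstar, Nval_zero_fun]

lemma Nstar_at_zero (r : ℕ) : Nstar a u r 0 = 0 := by
  simp [Nstar]

end Aux

section One

variable (a : ℕ → ℝ)

lemma Nval_one_succ (n : ℕ) (t : ℝ) :
    Nval a 1 (n + 1) t = (Finset.Icc 1 (n + 1)).sup'
      (Finset.nonempty_Icc.mpr (Nat.succ_le_succ (Nat.zero_le n)))
      (fun j => a j + Nstar a 1 (n + 1 - j) t) := by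
  rw [Nval_succ]
  refine Finset.sup'_congr _ rfl (fun j _ => ?_)
  rw [show a j * (1 - (1:ℝ)) + 1 = 1 by ring, one_mul]

lemma Nalloc_one (n j : ℕ) (t : ℝ) :
    Nalloc a 1 n j t = a j + Nstar a 1 (n - j) t := by
  rw [Nalloc, show a j * (1 - (1:ℝ)) + 1 = 1 by ring, one_mul]

lemma Nval_continuous : ∀ n : ℕ, Continuous (Nval a 1 n) := by
  intro n
  induction n using Nat.strong_induction_on with
  | _ n ih =>
    match n with
    | 0 => exact continuous_const
    | m + 1 =>
      have : (fun t => Nval a 1 (m + 1) t) = fun t =>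
          (Finset.Icc 1 (m + 1)).sup'
            (Finset.nonempty_Icc.mpr (Nat.succ_le_succ (Nat.zero_le m)))
            (fun j => a j + Nstar a 1 (m + 1 - j) t) := by
        funext t; exact Nval_one_succ a m t
      rw [show (Nval a 1 (m+1)) = (fun t => Nval a 1 (m + 1) t) from rfl, this]
      apply Continuous.finset_sup'_apply
      intro j hj
      have hj1 : 1 ≤ j := (Finset.mem_Icc.mp hj).1
      have hc : Continuous (Nval a 1 (m + 1 - j)) := ih _ (by omega)
      apply continuous_const.add
      unfold Nstar
      exact (Real.continuous_exp.comp continuous_neg).mul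
        (intervalIntegral.continuous_primitive
          (fun x y => ((hc.mul Real.continuous_exp).intervalIntegrable x y)) 0)

lemma Nstar_continuous (r : ℕ) : Continuous (Nstar a 1 r) := by
  unfold Nstar
  exact (Real.continuous_exp.comp continuous_neg).mul
    (intervalIntegral.continuous_primitive
      (fun x y => (((Nval_continuous a r).mul Real.continuous_exp).intervalIntegrable x y)) 0)

lemma Nval_at_zero (hmono : Monotone a) (ha0 : a 0 = 0) : ∀ n, Nval a 1 n 0 = a n := by
  intro n
  match n with
  | 0 => simpa [Nval_zero_fun] using ha0.symm
  | m + 1 =>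
    rw [Nval_one_succ]
    apply le_antisymm
    · apply Finset.sup'_le
      intro j hj
      rw [Nstar_at_zero]
      simpa using hmono (Finset.mem_Icc.mp hj).2
    · have hm : m + 1 ∈ Finset.Icc 1 (m + 1) := Finset.mem_Icc.mpr ⟨by omega, le_refl _⟩
      have := Finset.le_sup' (fun j => a j + Nstar a 1 (m + 1 - j) 0) hm
      simpa only [Nstar_at_zero, add_zero] using this

lemma Nval_one_eq (t : ℝ) : Nval a 1 1 t = a 1 := by
  rw [Nval_one_succ]
  simp [Nstar_zero_fun]

lemma Nstar_one_eq (t : ℝ) : Nstar a 1 1 t = a 1 * (1 - Real.exp (-t)) := by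
  unfold Nstar
  have : (fun x : ℝ => Nval a 1 1 x * Real.exp x) = fun x => a 1 * Real.exp x := by
    funext x; rw [Nval_one_eq]
  rw [this, intervalIntegral.integral_const_mul, integral_exp]
  rw [Real.exp_neg]
  have h := Real.exp_pos t
  field_simp
  rw [Real.exp_zero]

end One

section Concave

variable (a : ℕ → ℝ)

lemma diff_anti (hconc : ∀ j : ℕ, a (j + 2) - a (j + 1) < a (j + 1) - a j) :
    ∀ p i : ℕ, a (p + i + 1) - a (p + i) ≤ a (p + 1) - a p := by
  intro p i
  induction i with
  | zero => exact le_refl _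
  | succ i ih =>
      have h := hconc (p + i)
      have : a (p + i + 1 + 1) - a (p + i + 1) ≤ a (p + 1) - a p := by linarith
      exact this

lemma Nstar_concave_of (m : ℕ) (t : ℝ) (ht : 0 ≤ t)
    (h : ∀ x, 0 ≤ x → Nval a 1 (m + 2) x + Nval a 1 m x ≤ 2 * Nval a 1 (m + 1) x) :
    Nstar a 1 (m + 2) t + Nstar a 1 m t ≤ 2 * Nstar a 1 (m + 1) t := by
  have hi : ∀ r : ℕ, IntervalIntegrable (fun x => Nval a 1 r x * Real.exp x)
      volume 0 t := fun r =>
    ((Nval_continuous a r).mul Real.continuous_exp).intervalIntegrable 0 t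
  have key : (∫ x in (0:ℝ)..t, Nval a 1 (m + 2) x * Real.exp x) +
      (∫ x in (0:ℝ)..t, Nval a 1 m x * Real.exp x) ≤
      2 * ∫ x in (0:ℝ)..t, Nval a 1 (m + 1) x * Real.exp x := by
    rw [← intervalIntegral.integral_add (hi (m + 2)) (hi m),
      ← intervalIntegral.integral_const_mul]
    apply intervalIntegral.integral_mono_on ht ((hi (m + 2)).add (hi m))
      ((hi (m + 1)).const_mul 2)
    intro x hx
    have hh := h x hx.1
    have he := Real.exp_pos x
    nlinarith
  unfold Nstar
  have hep : (0:ℝ) ≤ Real.exp (-t) := (Real.exp_pos _).le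
  nlinarith [mul_le_mul_of_nonneg_left key hep]

lemma Nval_concave (ha0 : a 0 = 0) (hmono : StrictMono a)
    (hconc : ∀ j : ℕ, a (j + 2) - a (j + 1) < a (j + 1) - a j) :
    ∀ n : ℕ, ∀ t : ℝ, 0 ≤ t →
      Nval a 1 (n + 2) t + Nval a 1 n t ≤ 2 * Nval a 1 (n + 1) t := by
  intro n
  induction n using Nat.strong_induction_on with
  | _ n ih =>
  intro t ht
  have S1 : ∀ m, m < n → ∀ s : ℝ, 0 ≤ s →
      Nstar a 1 (m + 2) s + Nstar a 1 m s ≤ 2 * Nstar a 1 (m + 1) s :=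
    fun m hm s hs => Nstar_concave_of a m s hs (fun x hx => ih m hm x hx)
  have chain : ∀ i p : ℕ, p + i ≤ n → ∀ s : ℝ, 0 ≤ s →
      Nstar a 1 (p + i + 1) s + Nstar a 1 p s ≤
        Nstar a 1 (p + 1) s + Nstar a 1 (p + i) s := by
    intro i
    induction i with
    | zero => intro p _ s _; simp
    | succ i ihc =>
        intro p hp s hs
        have h1 := ihc p (by omega) s hs
        have h2 := S1 (p + i) (by omega) s hs
        have e1 : p + (i + 1) + 1 = (p + i) + 2 := by omega
        have e2 : p + (i + 1) = (p + i) + 1 := by omega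
        rw [e1, e2]
        linarith
  have chain' : ∀ p q : ℕ, p ≤ q → q ≤ n → ∀ s : ℝ, 0 ≤ s →
      Nstar a 1 (q + 1) s + Nstar a 1 p s ≤ Nstar a 1 (p + 1) s + Nstar a 1 q s := by
    intro p q hpq hq s hs
    obtain ⟨i, rfl⟩ := Nat.exists_eq_add_of_le hpq
    exact chain i p (by omega) s hs
  match n with
  | 0 =>
      have h01 : a 0 < a 1 := hmono (show 0 < 1 by omega)
      have ha1 : 0 ≤ a 1 := by linarith
      rw [Nval_zero_fun, Nval_one_eq, show (0:ℕ)+2 = 1+1 from rfl, Nval_one_succ]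
      have hb : ∀ j ∈ Finset.Icc 1 (1+1), a j + Nstar a 1 (1+1-j) t ≤ 2 * a 1 := by
        intro j hj
        have hjm := Finset.mem_Icc.mp hj
        obtain ⟨hj1, hj2⟩ := hjm
        interval_cases j
        · rw [show (1+1-1 : ℕ) = 1 from rfl, Nstar_one_eq]
          have hee : 0 ≤ Real.exp (-t) := (Real.exp_pos _).le
          nlinarith
        · rw [show (1+1-2 : ℕ) = 0 from rfl, Nstar_zero_fun]
          have h2 := hconc 0
          linarith
      have hs := Finset.sup'_le (Finset.nonempty_Icc.mpr (by omega)) _ hb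
      linarith
  | m + 1 =>
      obtain ⟨k, hk, hkeq⟩ := Finset.exists_mem_eq_sup'
        (Finset.nonempty_Icc.mpr (Nat.succ_le_succ (Nat.zero_le m)))
        (fun j => a j + Nstar a 1 (m + 1 - j) t)
      have hkm := Finset.mem_Icc.mp hk
      have hNn : Nval a 1 (m + 1) t = a k + Nstar a 1 (m + 1 - k) t := by
        rw [Nval_one_succ]; exact hkeq
      set n : ℕ := m + 1 with hn
      have hb : ∀ j ∈ Finset.Icc 1 (n + 2),
          a j + Nstar a 1 (n + 2 - j) t ≤ 2 * Nval a 1 (n + 1) t - Nval a 1 n t := by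
        intro j hj
        have hjm := Finset.mem_Icc.mp hj
        have hcomp : ∀ i ∈ Finset.Icc 1 (n + 1),
            a i + Nstar a 1 (n + 1 - i) t ≤ Nval a 1 (n + 1) t := by
          intro i hi
          rw [Nval_one_succ]
          exact Finset.le_sup' (fun j => a j + Nstar a 1 (n + 1 - j) t) hi
        rcases le_or_gt j (k + 1) with hcase | hcase
        · -- competitors j and k
          have c1 := hcomp j (Finset.mem_Icc.mpr ⟨hjm.1, by omega⟩)
          have c2 := hcomp k (Finset.mem_Icc.mpr ⟨hkm.1, by omega⟩)
          have hch := chain' (n - k) (n + 1 - j) (by omega) (by omega) t ht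
          have e1 : n + 1 - j + 1 = n + 2 - j := by omega
          have e2 : n - k + 1 = n + 1 - k := by omega
          rw [e1, e2] at hch
          rw [hNn]
          linarith
        · -- competitors j - 1 and k + 1
          have c1 := hcomp (j - 1) (Finset.mem_Icc.mpr ⟨by omega, by omega⟩)
          have c2 := hcomp (k + 1) (Finset.mem_Icc.mpr ⟨by omega, by omega⟩)
          have e1 : n + 1 - (j - 1) = n + 2 - j := by omega
          have e2 : n + 1 - (k + 1) = n - k := by omega
          rw [e1] at c1
          rw [e2] at c2
          have hda : a j + a k ≤ a (j - 1) + a (k + 1) := by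
            have hd := diff_anti a hconc k (j - 1 - k)
            have e3 : k + (j - 1 - k) = j - 1 := by omega
            have e4 : j - 1 + 1 = j := by omega
            rw [e3, e4] at hd
            linarith
          rw [hNn]
          linarith
      rw [show n + 2 = (n + 1) + 1 from rfl, Nval_one_succ]
      have : ((Finset.Icc 1 (n + 1 + 1)).sup'
          (Finset.nonempty_Icc.mpr (Nat.succ_le_succ (Nat.zero_le (n+1))))
          fun j => a j + Nstar a 1 (n + 1 + 1 - j) t) ≤
          2 * Nval a 1 (n + 1) t - Nval a 1 n t := by
        apply Finset.sup'_le
        intro j hj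
        have := hb j (by simpa using hj)
        simpa [show n + 1 + 1 = n + 2 from rfl] using this
      linarith

lemma Nstar_strict_concave (ha0 : a 0 = 0) (hmono : StrictMono a)
    (hconc : ∀ j : ℕ, a (j + 2) - a (j + 1) < a (j + 1) - a j)
    (m : ℕ) (t : ℝ) (ht : 0 < t) :
    Nstar a 1 (m + 2) t + Nstar a 1 m t < 2 * Nstar a 1 (m + 1) t := by
  have hi : ∀ r : ℕ, IntervalIntegrable (fun x => Nval a 1 r x * Real.exp x)
      volume 0 t := fun r =>
    ((Nval_continuous a r).mul Real.continuous_exp).intervalIntegrable 0 t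
  have hc : ∀ r : ℕ, Continuous (fun x => Nval a 1 r x * Real.exp x) := fun r =>
    (Nval_continuous a r).mul Real.continuous_exp
  have key : (∫ x in (0:ℝ)..t, Nval a 1 (m + 2) x * Real.exp x) +
      (∫ x in (0:ℝ)..t, Nval a 1 m x * Real.exp x) <
      2 * ∫ x in (0:ℝ)..t, Nval a 1 (m + 1) x * Real.exp x := by
    rw [← intervalIntegral.integral_add (hi (m + 2)) (hi m),
      ← intervalIntegral.integral_const_mul]
    apply intervalIntegral.integral_lt_integral_of_continuousOn_of_le_of_exists_lt ht
      (((hc (m + 2)).add (hc m)).continuousOn)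
      ((continuous_const.mul (hc (m + 1))).continuousOn)
    · intro x hx
      have hh := Nval_concave a ha0 hmono hconc m x (le_of_lt hx.1)
      have he := Real.exp_pos x
      show Nval a 1 (m + 2) x * Real.exp x + Nval a 1 m x * Real.exp x ≤ 2 * (Nval a 1 (m + 1) x * Real.exp x)
      nlinarith
    · refine ⟨0, Set.left_mem_Icc.mpr ht.le, ?_⟩
      have h0 := hconc m
      show Nval a 1 (m + 2) 0 * Real.exp 0 + Nval a 1 m 0 * Real.exp 0 < 2 * (Nval a 1 (m + 1) 0 * Real.exp 0)
      simp only [Nval_at_zero a hmono.monotone ha0, Real.exp_zero, mul_one]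
      linarith
  have hep : (0:ℝ) < Real.exp (-t) := Real.exp_pos _
  unfold Nstar
  nlinarith [mul_lt_mul_of_pos_left key hep]

end Concave

/-- `Kopt a u n t = min { j ∈ {1,…,n} : N_n(j,t) = N(n,t) }`. -/
noncomputable def Kopt (a : ℕ → ℝ) (u : ℝ) (n : ℕ) (t : ℝ) : ℕ :=
  sInf {j : ℕ | 1 ≤ j ∧ j ≤ n ∧ Nalloc a u n j t = Nval a u n t}

open ENNReal in
/-- Interlacing of the crossing times (from the proof of Theorem 4.3): with
`t(n,j)` the unique solution of `N_n(j+1,t) = N_n(j,t)` for `1 ≤ j ≤ n-1`, and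
`t(n,n) = 0`, `t(n,0) = ∞`, one has `t(n,j+1) < t(n+1,j+1) < t(n,j)` for all
`n ≥ 1` and `j = 0,…,n-1`. -/
theorem invincible_crossing_interlace
    (a : ℕ → ℝ) (haI : ∀ j, a j ∈ Set.Icc (0:ℝ) 1) (ha0 : a 0 = 0)
    (hmono : StrictMono a)
    (hconc : ∀ j : ℕ, a (j + 2) - a (j + 1) < a (j + 1) - a j)
    (tc : ℕ → ℕ → ℝ≥0∞)
    (htop : ∀ n : ℕ, 1 ≤ n → tc n 0 = ⊤)
    (hzero : ∀ n : ℕ, 1 ≤ n → tc n n = 0)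
    (hsol : ∀ n j : ℕ, 1 ≤ j → j + 1 ≤ n →
      ∃ r : ℝ, 0 < r ∧ tc n j = ENNReal.ofReal r ∧
        Nalloc a 1 n (j + 1) r = Nalloc a 1 n j r ∧
        ∀ s : ℝ, 0 ≤ s → Nalloc a 1 n (j + 1) s = Nalloc a 1 n j s → s = r) :
    ∀ n : ℕ, 1 ≤ n → ∀ j : ℕ, j + 1 ≤ n →
      tc n (j + 1) < tc (n + 1) (j + 1) ∧ tc (n + 1) (j + 1) < tc n j := by
  intro n hn j hj
  set d := n - (j + 1) with hd
  have hnj1 : n - j = d + 1 := by omega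
  have hnj2 : n + 1 - (j + 1) = d + 1 := by omega
  have hnj3 : n + 1 - (j + 2) = d := by omega
  have hψc : ∀ e : ℕ, Continuous (fun s => Nstar a 1 (e + 1) s - Nstar a 1 e s) :=
    fun e => (Nstar_continuous a (e + 1)).sub (Nstar_continuous a e)
  have ivt : ∀ (e : ℕ) (c r : ℝ), 0 ≤ r → 0 ≤ c →
      c ≤ Nstar a 1 (e + 1) r - Nstar a 1 e r →
      ∃ s, 0 ≤ s ∧ s ≤ r ∧ Nstar a 1 (e + 1) s - Nstar a 1 e s = c := by
    intro e c r hr hc hcr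
    have hsub := intermediate_value_Icc hr (hψc e).continuousOn
    have hmem : c ∈ Set.Icc (Nstar a 1 (e + 1) 0 - Nstar a 1 e 0)
        (Nstar a 1 (e + 1) r - Nstar a 1 e r) := by
      rw [Nstar_at_zero, Nstar_at_zero, sub_zero]
      exact ⟨hc, hcr⟩
    obtain ⟨s, hs, hsc⟩ := hsub hmem
    exact ⟨s, hs.1, hs.2, hsc⟩
  have halloc : ∀ (N J : ℕ) (s : ℝ), Nalloc a 1 N (J + 1) s = Nalloc a 1 N J s ↔
      Nstar a 1 (N - J) s - Nstar a 1 (N - (J + 1)) s = a (J + 1) - a J := by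
    intro N J s
    rw [Nalloc_one, Nalloc_one]
    constructor <;> intro h <;> linarith
  obtain ⟨r, hr0, hrtc, hre, hru⟩ := hsol (n + 1) (j + 1) (by omega) (by omega)
  have hre' : Nstar a 1 (d + 1) r - Nstar a 1 d r = a (j + 2) - a (j + 1) := by
    have h := (halloc (n + 1) (j + 1) r).mp hre
    rwa [hnj2, hnj3] at h
  have hc1 : 0 < a (j + 2) - a (j + 1) := sub_pos.mpr (hmono (by omega))
  have hc12 : a (j + 2) - a (j + 1) < a (j + 1) - a j := hconc j
  constructor
  · -- tc n (j+1) < tc (n+1) (j+1)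
    rcases eq_or_lt_of_le hj with heq | hlt
    · rw [hrtc, heq, hzero n hn]
      exact ENNReal.ofReal_pos.mpr hr0
    · obtain ⟨r₀, hr00, hr0tc, hr0e, hr0u⟩ := hsol n (j + 1) (by omega) (by omega)
      set e : ℕ := n - (j + 2) with hedef
      have hde : d = e + 1 := by omega
      have he1 : n - (j + 1) = e + 1 := by omega
      have he2 : n - (j + 2) = e := by omega
      have hr0e' : Nstar a 1 (e + 1) r₀ - Nstar a 1 e r₀ = a (j + 2) - a (j + 1) := by
        have h := (halloc n (j + 1) r₀).mp hr0e
        rwa [he1, he2] at h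
      have hstrict : Nstar a 1 (e + 2) r + Nstar a 1 e r < 2 * Nstar a 1 (e + 1) r :=
        Nstar_strict_concave a ha0 hmono hconc e r hr0
      have hgt : a (j + 2) - a (j + 1) < Nstar a 1 (e + 1) r - Nstar a 1 e r := by
        rw [hde] at hre'
        have : Nstar a 1 (e + 1 + 1) r - Nstar a 1 (e + 1) r = a (j + 2) - a (j + 1) := hre'
        have h2 : Nstar a 1 (e + 1 + 1) r = Nstar a 1 (e + 2) r := rfl
        linarith [hstrict, this]
      obtain ⟨s, hs0, hsr, hse⟩ := ivt e (a (j + 2) - a (j + 1)) r hr0.le hc1.le hgt.le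
      have hseq : s = r₀ := by
        apply hr0u s hs0
        rw [halloc n (j + 1) s, he1, he2]
        exact hse
      have hne : r₀ ≠ r := by
        intro hcon
        rw [← hcon] at hgt
        rw [hr0e'] at hgt
        exact lt_irrefl _ hgt
      have : r₀ < r := lt_of_le_of_ne (hseq ▸ hsr) hne
      rw [hr0tc, hrtc]
      exact (ENNReal.ofReal_lt_ofReal_iff hr0).mpr this
  · -- tc (n+1) (j+1) < tc n j
    rcases Nat.eq_zero_or_pos j with hj0 | hj1
    · rw [hrtc, hj0, htop n hn]
      exact ENNReal.ofReal_lt_top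
    · obtain ⟨r₂, hr20, hr2tc, hr2e, hr2u⟩ := hsol n j hj1 hj
      have hr2e' : Nstar a 1 (d + 1) r₂ - Nstar a 1 d r₂ = a (j + 1) - a j := by
        have h := (halloc n j r₂).mp hr2e
        rwa [hnj1, show n - (j + 1) = d from rfl] at h
      obtain ⟨s, hs0, hsr, hse⟩ := ivt d (a (j + 2) - a (j + 1)) r₂ hr20.le hc1.le
        (by linarith)
      have hseq : s = r := by
        apply hru s hs0
        rw [halloc (n + 1) (j + 1) s, hnj2, hnj3]
        exact hse
      have hne : r ≠ r₂ := by
        intro hcon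
        rw [hcon] at hre'
        rw [hre'] at hr2e'
        linarith
      have : r < r₂ := lt_of_le_of_ne (hseq ▸ hsr) hne
      rw [hrtc, hr2tc]
      exact (ENNReal.ofReal_lt_ofReal_iff hr20).mpr this
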